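/- Let (Ω, F, P) be a probability space, let Y₁, Y₀ be integrable random variables, D a {0,1}-valued random variable, and X a random element such that (Y₁, Y₀) is conditionally independent of D given X. Suppose p(X) := P(D = 1 | X) satisfies 0 < p(X) < 1 almost surely, and that D·Y₁/p(X) and (1−D)·Y₀/(1−p(X)) are integrable. Then E[ D·Y₁/p(X) − (1−D)·Y₀/(1−p(X)) ] = E[Y₁ − Y₀]. -/

import Mathlib

open MeasureTheory ProbabilityTheory Set

private lemma aux_fact {Ω : Type*} {m m₁ : MeasurableSpace Ω} {mΩ : MeasurableSpace Ω}
    {μ : Measure Ω} [IsProbabilityMeasure μ]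
    (hm : m ≤ mΩ) (hm₁ : m₁ ≤ mΩ)
    {D p : Ω → ℝ} (hDint : Integrable D μ)
    (hpm : StronglyMeasurable[m] p) (hpint : Integrable p μ)
    (hbasic : ∀ s₁ s₂ : Set Ω, MeasurableSet[m] s₁ → MeasurableSet[m₁] s₂ →
      ∫ x in s₁ ∩ s₂, D x ∂μ = ∫ x in s₁ ∩ s₂, p x ∂μ) :
    p =ᵐ[μ] μ[D | m ⊔ m₁] := by
  have hn : m ⊔ m₁ ≤ mΩ := sup_le hm hm₁
  haveI : SigmaFinite (μ.trim hn) := by infer_instance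
  have hDP : ∫ x, D x ∂μ = ∫ x, p x ∂μ := by
    simpa using hbasic univ univ MeasurableSet.univ MeasurableSet.univ
  have hC : ∀ t : Set Ω, MeasurableSet[m ⊔ m₁] t →
      ∫ x in t, D x ∂μ = ∫ x in t, p x ∂μ := by
    have hgen : m ⊔ m₁ = MeasurableSpace.generateFrom
        {t : Set Ω | ∃ s₁, MeasurableSet[m] s₁ ∧ ∃ s₂, MeasurableSet[m₁] s₂ ∧ t = s₁ ∩ s₂} := by
      apply le_antisymm
      · refine sup_le ?_ ?_
        · intro t ht
          exact MeasurableSpace.measurableSet_generateFrom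
            ⟨t, ht, univ, MeasurableSet.univ, (Set.inter_univ t).symm⟩
        · intro t ht
          exact MeasurableSpace.measurableSet_generateFrom
            ⟨univ, MeasurableSet.univ, t, ht, (Set.univ_inter t).symm⟩
      · refine MeasurableSpace.generateFrom_le ?_
        rintro t ⟨s₁, hs₁, s₂, hs₂, rfl⟩
        exact ((le_sup_left : m ≤ m ⊔ m₁) s₁ hs₁).inter
          ((le_sup_right : m₁ ≤ m ⊔ m₁) s₂ hs₂)
    intro t ht
    refine @MeasurableSpace.induction_on_inter Ω (m ⊔ m₁)
      (fun t _ => ∫ x in t, D x ∂μ = ∫ x in t, p x ∂μ)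
      {t : Set Ω | ∃ s₁, MeasurableSet[m] s₁ ∧ ∃ s₂, MeasurableSet[m₁] s₂ ∧ t = s₁ ∩ s₂}
      hgen ?_ ?_ ?_ ?_ ?_ t ht
    · rintro t₁ ⟨a₁, ha₁, b₁, hb₁, rfl⟩ t₂ ⟨a₂, ha₂, b₂, hb₂, rfl⟩ _
      exact ⟨a₁ ∩ a₂, ha₁.inter ha₂, b₁ ∩ b₂, hb₁.inter hb₂, by
        rw [Set.inter_inter_inter_comm]⟩
    · simp
    · rintro t ⟨s₁, hs₁, s₂, hs₂, rfl⟩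
      exact hbasic _ _ hs₁ hs₂
    · intro t htm ih
      have htΩ : MeasurableSet[mΩ] t := hn t htm
      have h1 := integral_add_compl htΩ hDint
      have h2 := integral_add_compl htΩ hpint
      linarith
    · intro f hdisj hfm ih
      rw [integral_iUnion (fun i => hn _ (hfm i)) hdisj hDint.integrableOn,
        integral_iUnion (fun i => hn _ (hfm i)) hdisj hpint.integrableOn]
      exact tsum_congr ih
  exact ae_eq_condExp_of_forall_setIntegral_eq hn hDint
    (fun s _ _ => hpint.integrableOn)
    (fun s hs _ => (hC s hs).symm)
    ((hpm.mono (le_sup_left : m ≤ m ⊔ m₁)).aestronglyMeasurable (μ := μ))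

lemma stmt3_aux {Ω : Type*} {m : MeasurableSpace Ω} {mΩ : MeasurableSpace Ω}
    [StandardBorelSpace Ω] {μ : Measure Ω} [IsProbabilityMeasure μ]
    (Y₁ Y₀ D : Ω → ℝ)
    (hY₁ : Integrable Y₁ μ) (hY₀ : Integrable Y₀ μ)
    (hD : ∀ ω, D ω = 0 ∨ D ω = 1) (hDmeas : Measurable[mΩ] D)
    (hmX : m ≤ mΩ)
    (hindep : CondIndepFun m hmX (fun ω => (Y₁ ω, Y₀ ω)) D μ)
    (p : Ω → ℝ) (hp : p = μ[D | m])
    (hp01 : ∀ᵐ ω ∂μ, 0 < p ω ∧ p ω < 1)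
    (hint1 : Integrable (fun ω => D ω * Y₁ ω / p ω) μ)
    (hint0 : Integrable (fun ω => (1 - D ω) * Y₀ ω / (1 - p ω)) μ) :
    ∫ ω, (D ω * Y₁ ω / p ω - (1 - D ω) * Y₀ ω / (1 - p ω)) ∂μ
      = ∫ ω, (Y₁ ω - Y₀ ω) ∂μ := by
  classical
  have hDint : Integrable D μ := by
    refine (integrable_const (1:ℝ)).mono' hDmeas.aestronglyMeasurable ?_
    refine Filter.Eventually.of_forall fun ω => ?_
    rcases hD ω with h | h <;> simp [h]
  -- measurable modifications of Y₁, Y₀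
  set Y₁' := hY₁.1.mk Y₁ with hY₁'def
  set Y₀' := hY₀.1.mk Y₀ with hY₀'def
  have hY₁'sm := hY₁.1.stronglyMeasurable_mk
  have hY₀'sm := hY₀.1.stronglyMeasurable_mk
  have hY₁e : Y₁ =ᵐ[μ] Y₁' := hY₁.1.ae_eq_mk
  have hY₀e : Y₀ =ᵐ[μ] Y₀' := hY₀.1.ae_eq_mk
  set W : Ω → ℝ × ℝ := fun ω => (Y₁' ω, Y₀' ω) with hWdef
  have hWmeas : Measurable W := hY₁'sm.measurable.prodMk hY₀'sm.measurable
  -- transfer the conditional independence to the measurable modification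
  have hindep' : CondIndepFun m hmX W D μ := by
    have h0 : ∀ᵐ ω ∂μ, Y₁ ω = Y₁' ω ∧ Y₀ ω = Y₀' ω := hY₁e.and hY₀e
    obtain ⟨N, hNsub, hNmeas, hNnull⟩ :=
      exists_measurable_superset_of_null (ae_iff.mp h0)
    have hker : ∀ᵐ ω ∂μ, (condExpKernel μ m ω N).toReal = 0 := by
      have h1 : (fun ω => (condExpKernel μ m ω N).toReal) =ᵐ[μ] μ⟦N | m⟧ :=
        condExpKernel_ae_eq_condExp hmX hNmeas
      have hind : (N.indicator (fun _ => (1:ℝ))) =ᵐ[μ] 0 := by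
        filter_upwards [measure_eq_zero_iff_ae_notMem.mp hNnull] with ω hω
        simp [hω]
      have h2 : (μ⟦N | m⟧) =ᵐ[μ] 0 := by
        refine (condExp_congr_ae hind).trans ?_
        rw [condExp_zero]
      exact h1.trans h2
    have hker' : ∀ᵐ ω ∂μ, condExpKernel μ m ω N = 0 := by
      filter_upwards [hker] with ω hω
      exact (ENNReal.toReal_eq_zero_iff _).mp hω |>.resolve_right (measure_ne_top _ _)
    have hSmeas : MeasurableSet[m] {ω | condExpKernel μ m ω N ≠ 0} :=
      ((measurable_condExpKernel hNmeas) (measurableSet_singleton 0)).compl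
    have hSnull : μ {ω | condExpKernel μ m ω N ≠ 0} = 0 := ae_iff.mp hker'
    have hStrim : μ.trim hmX {ω | condExpKernel μ m ω N ≠ 0} = 0 := by
      rw [trim_measurableSet_eq hmX hSmeas]; exact hSnull
    refine Kernel.IndepFun.congr' hindep ?_
      (Filter.Eventually.of_forall fun a => Filter.EventuallyEq.rfl)
    filter_upwards [measure_eq_zero_iff_ae_notMem.mp hStrim] with a ha
    have haN : condExpKernel μ m a N = 0 := by simpa using ha
    rw [Filter.EventuallyEq, ae_iff]
    refine measure_mono_null ?_ haN
    intro x hx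
    refine hNsub ?_
    simp only [mem_setOf_eq] at hx ⊢
    intro hcon
    exact hx (by rw [hcon.1, hcon.2])
  set A : Set Ω := D ⁻¹' {1} with hAdef
  have hAmeas : MeasurableSet A := hDmeas (measurableSet_singleton 1)
  have hDind : D = A.indicator (fun _ => (1:ℝ)) := by
    funext ω
    rcases hD ω with h | h
    · have hω : ω ∉ A := by simp [hAdef, h]
      simp [hω, h]
    · have hω : ω ∈ A := by simp [hAdef, h]
      simp [hω, h]
  have hpm : StronglyMeasurable[m] p := by rw [hp]; exact stronglyMeasurable_condExp
  have hpint : Integrable p μ := by rw [hp]; exact integrable_condExp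
  have hpbdd : ∀ᵐ ω ∂μ, ‖p ω‖ ≤ 1 := by
    filter_upwards [hp01] with ω hω
    rw [Real.norm_eq_abs, abs_of_pos hω.1]
    exact hω.2.le
  have hpA : p = μ⟦A | m⟧ := by
    rw [hp, hDind]
  have hkey : ∀ u : Set (ℝ × ℝ), MeasurableSet u →
      (μ⟦W ⁻¹' u ∩ A | m⟧) =ᵐ[μ] fun ω => (μ⟦W ⁻¹' u | m⟧) ω * p ω := by
    intro u hu
    have h := ((condIndepFun_iff_condExp_inter_preimage_eq_mul hWmeas hDmeas).mp hindep') u {1}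
      hu (measurableSet_singleton 1)
    rw [hpA]
    exact h
  -- the basic case computation
  have hbasic : ∀ s₁ s₂ : Set Ω, MeasurableSet[m] s₁ →
      MeasurableSet[MeasurableSpace.comap W inferInstance] s₂ →
      ∫ x in s₁ ∩ s₂, D x ∂μ = ∫ x in s₁ ∩ s₂, p x ∂μ := by
    rintro s₁ s₂ hs₁ ⟨u, hu, rfl⟩
    have hB : MeasurableSet (W ⁻¹' u) := hWmeas hu
    have hs₁Ω : MeasurableSet s₁ := hmX s₁ hs₁
    have hgint : Integrable ((W ⁻¹' u).indicator (fun _ => (1:ℝ))) μ :=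
      (integrable_const (1:ℝ)).indicator hB
    have hBAint : Integrable (((W ⁻¹' u) ∩ A).indicator (fun _ => (1:ℝ))) μ :=
      (integrable_const (1:ℝ)).indicator (hB.inter hAmeas)
    have hpgint : Integrable (p * (W ⁻¹' u).indicator (fun _ => (1:ℝ))) μ := by
      refine hgint.bdd_mul (hpm.mono hmX).aestronglyMeasurable hpbdd
    calc ∫ x in s₁ ∩ W ⁻¹' u, D x ∂μ
        = ∫ x in s₁, (W ⁻¹' u).indicator D x ∂μ := (setIntegral_indicator hB).symm
      _ = ∫ x in s₁, ((W ⁻¹' u) ∩ A).indicator (fun _ => (1:ℝ)) x ∂μ := by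
          rw [hDind, Set.indicator_indicator]
      _ = ∫ x in s₁, (μ⟦(W ⁻¹' u) ∩ A | m⟧) x ∂μ :=
          (setIntegral_condExp hmX hBAint hs₁).symm
      _ = ∫ x in s₁, (μ⟦W ⁻¹' u | m⟧) x * p x ∂μ := by
          refine setIntegral_congr_ae hs₁Ω ?_
          filter_upwards [hkey u hu] with x hx _
          exact hx
      _ = ∫ x in s₁, p x * (μ⟦W ⁻¹' u | m⟧) x ∂μ := by
          simp_rw [mul_comm]
      _ = ∫ x in s₁, (μ[p * (W ⁻¹' u).indicator (fun _ => (1:ℝ)) | m]) x ∂μ := by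
          refine setIntegral_congr_ae hs₁Ω ?_
          filter_upwards [condExp_mul_of_stronglyMeasurable_left hpm hpgint hgint] with x hx _
          rw [hx]
          simp
      _ = ∫ x in s₁, (p * (W ⁻¹' u).indicator (fun _ => (1:ℝ))) x ∂μ :=
          setIntegral_condExp hmX hpgint hs₁
      _ = ∫ x in s₁, (W ⁻¹' u).indicator p x ∂μ := by
          refine setIntegral_congr_ae hs₁Ω ?_
          refine Filter.Eventually.of_forall fun x _ => ?_
          by_cases hxB : x ∈ W ⁻¹' u <;> simp [hxB]
      _ = ∫ x in s₁ ∩ W ⁻¹' u, p x ∂μ := setIntegral_indicator hB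
  have hfact : p =ᵐ[μ] μ[D | m ⊔ MeasurableSpace.comap W inferInstance] :=
    aux_fact hmX hWmeas.comap_le hDint hpm hpint hbasic
  have hn : m ⊔ MeasurableSpace.comap W inferInstance ≤ mΩ := sup_le hmX hWmeas.comap_le
  haveI : SigmaFinite (μ.trim hn) := by infer_instance
  have hWc : Measurable[MeasurableSpace.comap W inferInstance] W :=
    measurable_iff_comap_le.mpr le_rfl
  have hY₁'n : Measurable[m ⊔ MeasurableSpace.comap W inferInstance] Y₁' := by
    have h1 : Measurable[MeasurableSpace.comap W inferInstance] Y₁' := by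
      have hWc' := hWc
      rw [hWdef] at hWc' ⊢
      exact measurable_fst.comp hWc'
    exact h1.mono le_sup_right le_rfl
  have hY₀'n : Measurable[m ⊔ MeasurableSpace.comap W inferInstance] Y₀' := by
    have h1 : Measurable[MeasurableSpace.comap W inferInstance] Y₀' := by
      have hWc' := hWc
      rw [hWdef] at hWc' ⊢
      exact measurable_snd.comp hWc'
    exact h1.mono le_sup_right le_rfl
  have hpn : Measurable[m ⊔ MeasurableSpace.comap W inferInstance] p :=
    hpm.measurable.mono le_sup_left le_rfl
  -- first term
  have hf₁ : StronglyMeasurable[m ⊔ MeasurableSpace.comap W inferInstance]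
      (fun ω => Y₁' ω / p ω) := (hY₁'n.div hpn).stronglyMeasurable
  have hfg₁ : Integrable ((fun ω => Y₁' ω / p ω) * D) μ := by
    refine (integrable_congr ?_).mp hint1
    filter_upwards [hY₁e] with ω hω
    simp only [Pi.mul_apply]
    rw [hω]
    ring
  have pullout₁ := condExp_mul_of_stronglyMeasurable_left hf₁ hfg₁ hDint
  have T1 : ∫ ω, D ω * Y₁ ω / p ω ∂μ = ∫ ω, Y₁ ω ∂μ := by
    calc ∫ ω, D ω * Y₁ ω / p ω ∂μ
        = ∫ ω, ((fun ω => Y₁' ω / p ω) * D) ω ∂μ := by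
          refine integral_congr_ae ?_
          filter_upwards [hY₁e] with ω hω
          simp only [Pi.mul_apply]
          rw [hω]
          ring
      _ = ∫ ω, (μ[(fun ω => Y₁' ω / p ω) * D | m ⊔ MeasurableSpace.comap W inferInstance]) ω ∂μ :=
          (integral_condExp hn).symm
      _ = ∫ ω, Y₁ ω ∂μ := by
          refine integral_congr_ae ?_
          filter_upwards [pullout₁, hfact, hp01, hY₁e] with ω h1 h2 h3 h4
          rw [h1]
          simp only [Pi.mul_apply]
          rw [← h2, div_mul_cancel₀ _ (ne_of_gt h3.1), ← h4]
  -- second term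
  have hg₀int : Integrable (fun ω => (1:ℝ) - D ω) μ := (integrable_const (1:ℝ)).sub hDint
  have hcond₀ : μ[(fun ω => (1:ℝ) - D ω) | m ⊔ MeasurableSpace.comap W inferInstance]
      =ᵐ[μ] fun ω => 1 - p ω := by
    have h := condExp_sub (m := m ⊔ MeasurableSpace.comap W inferInstance)
      (integrable_const (1:ℝ)) hDint
    have hc := condExp_const hn (1:ℝ) (μ := μ)
    filter_upwards [h, hfact] with ω h1 h2
    have : (fun ω => (1:ℝ) - D ω) = (fun _ => (1:ℝ)) - D := rfl
    rw [this, h1]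
    simp only [Pi.sub_apply, hc, ← h2]
  have hf₀ : StronglyMeasurable[m ⊔ MeasurableSpace.comap W inferInstance]
      (fun ω => Y₀' ω / (1 - p ω)) := (hY₀'n.div (measurable_const.sub hpn)).stronglyMeasurable
  have hfg₀ : Integrable ((fun ω => Y₀' ω / (1 - p ω)) * (fun ω => (1:ℝ) - D ω)) μ := by
    refine (integrable_congr ?_).mp hint0
    filter_upwards [hY₀e] with ω hω
    simp only [Pi.mul_apply]
    rw [hω]
    ring
  have pullout₀ := condExp_mul_of_stronglyMeasurable_left hf₀ hfg₀ hg₀int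
  have T0 : ∫ ω, (1 - D ω) * Y₀ ω / (1 - p ω) ∂μ = ∫ ω, Y₀ ω ∂μ := by
    calc ∫ ω, (1 - D ω) * Y₀ ω / (1 - p ω) ∂μ
        = ∫ ω, ((fun ω => Y₀' ω / (1 - p ω)) * (fun ω => (1:ℝ) - D ω)) ω ∂μ := by
          refine integral_congr_ae ?_
          filter_upwards [hY₀e] with ω hω
          simp only [Pi.mul_apply]
          rw [hω]
          ring
      _ = ∫ ω, (μ[(fun ω => Y₀' ω / (1 - p ω)) * (fun ω => (1:ℝ) - D ω) |
            m ⊔ MeasurableSpace.comap W inferInstance]) ω ∂μ :=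
          (integral_condExp hn).symm
      _ = ∫ ω, Y₀ ω ∂μ := by
          refine integral_congr_ae ?_
          filter_upwards [pullout₀, hcond₀, hp01, hY₀e] with ω h1 h2 h3 h4
          rw [h1]
          simp only [Pi.mul_apply]
          rw [h2, div_mul_cancel₀ _ (sub_ne_zero_of_ne (ne_of_gt h3.2)), ← h4]
  rw [integral_sub hint1 hint0, integral_sub hY₁ hY₀, T1, T0]

theorem stmt3 {Ω E : Type*} [MeasurableSpace Ω] [StandardBorelSpace Ω]
    [MeasurableSpace E]
    (μ : Measure Ω) [IsProbabilityMeasure μ]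
    (Y₁ Y₀ D : Ω → ℝ) (X : Ω → E)
    (hY₁ : Integrable Y₁ μ) (hY₀ : Integrable Y₀ μ)
    (hD : ∀ ω, D ω = 0 ∨ D ω = 1)
    (hDmeas : Measurable D) (hXmeas : Measurable X)
    (hmX : MeasurableSpace.comap X ‹MeasurableSpace E› ≤ ‹MeasurableSpace Ω›)
    (hindep : CondIndepFun (MeasurableSpace.comap X ‹MeasurableSpace E›) hmX
      (fun ω => (Y₁ ω, Y₀ ω)) D μ)
    (p : Ω → ℝ)
    (hp : p = μ[D | MeasurableSpace.comap X ‹MeasurableSpace E›])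
    (hp01 : ∀ᵐ ω ∂μ, 0 < p ω ∧ p ω < 1)
    (hint1 : Integrable (fun ω => D ω * Y₁ ω / p ω) μ)
    (hint0 : Integrable (fun ω => (1 - D ω) * Y₀ ω / (1 - p ω)) μ) :
    ∫ ω, (D ω * Y₁ ω / p ω - (1 - D ω) * Y₀ ω / (1 - p ω)) ∂μ
      = ∫ ω, (Y₁ ω - Y₀ ω) ∂μ :=
  stmt3_aux Y₁ Y₀ D hY₁ hY₀ hD hDmeas hmX hindep p hp hp01 hint1 hint0
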